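/- Let T be a left continuous t-norm on [0,1] and L a right continuous L-operation on [0,∞]. The following are equivalent: (1) τ_{T,L}(f,g) = (L⊗T)(f,g) for all d.d.f.'s f, g; (2) τ_{T,L}(f,g) is a d.d.f. for all d.d.f.'s f, g; (3) L satisfies the condition (LCS): if x < x', y < y' and L(x',y') < ∞, then L(x,y) < L(x',y'). -/

import Mathlib

open ENNReal Set

/-- A distance distribution function: increasing `f : [0,∞] → [0,1]` with
`f 0 = 0`, `f ∞ = 1`, left continuous on `(0,∞)`. -/
def IsDDF (f : ℝ≥0∞ → ℝ≥0∞) : Prop :=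
  Monotone f ∧ (∀ x, f x ≤ 1) ∧ f 0 = 0 ∧ f ⊤ = 1 ∧
    ∀ x : ℝ≥0∞, 0 < x → x < ⊤ → f x = ⨆ y ∈ Set.Iio x, f y

/-- The largest quasi-inverse `f∨ y = inf {x | f x > y}`. -/
noncomputable def qInv (f : ℝ≥0∞ → ℝ≥0∞) : ℝ≥0∞ → ℝ≥0∞ :=
  fun y => sInf {x | y < f x}

/-- The unit interval `[0,1]` inside `[0,∞]`. -/
def I01 : Set ℝ≥0∞ := Set.Icc 0 1

/-- A left continuous t-norm on `[0,1]`: commutative, associative, increasing in each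
place, identity `1`, left continuous in each variable. -/
def IsLeftContTNorm (T : ℝ≥0∞ → ℝ≥0∞ → ℝ≥0∞) : Prop :=
  (∀ p ∈ I01, ∀ q ∈ I01, T p q ∈ I01) ∧
  (∀ p ∈ I01, ∀ q ∈ I01, T p q = T q p) ∧
  (∀ p ∈ I01, ∀ q ∈ I01, ∀ r ∈ I01, T (T p q) r = T p (T q r)) ∧
  (∀ p ∈ I01, T p 1 = p) ∧
  (∀ q ∈ I01, ∀ p₁ ∈ I01, ∀ p₂ ∈ I01, p₁ ≤ p₂ → T p₁ q ≤ T p₂ q) ∧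
  (∀ q ∈ I01, ∀ p ∈ I01, 0 < p → T p q = ⨆ p' ∈ Set.Iio p, T p' q)

/-- A right continuous `L`-operation on `[0,∞]`: commutative, associative, increasing in
each place, identity `0`, right continuous in each variable. -/
def IsRightContLOp (L : ℝ≥0∞ → ℝ≥0∞ → ℝ≥0∞) : Prop :=
  (∀ x y, L x y = L y x) ∧
  (∀ x y z, L (L x y) z = L x (L y z)) ∧
  (∀ x, L x 0 = x) ∧
  (∀ y x₁ x₂, x₁ ≤ x₂ → L x₁ y ≤ L x₂ y) ∧
  (∀ y x, x < ⊤ → L x y = ⨅ x' ∈ Set.Ioi x, L x' y)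

/-- Joint continuity of a t-norm on `[0,1] × [0,1]`. -/
def TNormContinuous (T : ℝ≥0∞ → ℝ≥0∞ → ℝ≥0∞) : Prop :=
  ContinuousOn (fun pq : ℝ≥0∞ × ℝ≥0∞ => T pq.1 pq.2) (I01 ×ˢ I01)

/-- The tensor-product triangle function:
`(L ⊗ T)(f,g)(x) = sup {T (f r) (g s) | L r s < x}` for `x < ∞`, and `1` at `∞`. -/
noncomputable def tensor (L T : ℝ≥0∞ → ℝ≥0∞ → ℝ≥0∞) (f g : ℝ≥0∞ → ℝ≥0∞) :
    ℝ≥0∞ → ℝ≥0∞ :=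
  fun x => if x = ⊤ then 1 else ⨆ r, ⨆ s, ⨆ _ : L r s < x, T (f r) (g s)

/-- `τ_{T,L}(f,g)(x) = sup {T (f r) (g s) | L r s ≤ x}`. -/
noncomputable def tauTL (L T : ℝ≥0∞ → ℝ≥0∞ → ℝ≥0∞) (f g : ℝ≥0∞ → ℝ≥0∞) :
    ℝ≥0∞ → ℝ≥0∞ :=
  fun x => ⨆ r, ⨆ s, ⨆ _ : L r s ≤ x, T (f r) (g s)

section Aux

variable {T L : ℝ≥0∞ → ℝ≥0∞ → ℝ≥0∞} {f g : ℝ≥0∞ → ℝ≥0∞}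

lemma zero_mem_I01 : (0:ℝ≥0∞) ∈ I01 := ⟨le_refl _, zero_le_one⟩
lemma one_mem_I01 : (1:ℝ≥0∞) ∈ I01 := ⟨zero_le, le_refl _⟩

lemma ddf_mem_I01 (hf : IsDDF f) (r : ℝ≥0∞) : f r ∈ I01 := ⟨zero_le, hf.2.1 r⟩

lemma T_zero_left (hT : IsLeftContTNorm T) {q : ℝ≥0∞} (hq : q ∈ I01) : T 0 q = 0 := by
  obtain ⟨hr, hc, -, hid, hm, -⟩ := hT
  refine le_antisymm ?_ (zero_le)
  calc T 0 q = T q 0 := hc 0 zero_mem_I01 q hq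
    _ ≤ T 1 0 := hm 0 zero_mem_I01 q hq 1 one_mem_I01 hq.2
    _ = T 0 1 := hc 1 one_mem_I01 0 zero_mem_I01
    _ = 0 := hid 0 zero_mem_I01


lemma T_zero_right (hT : IsLeftContTNorm T) {p : ℝ≥0∞} (hp : p ∈ I01) : T p 0 = 0 := by
  rw [hT.2.1 p hp 0 zero_mem_I01]; exact T_zero_left hT hp

lemma T_one_one (hT : IsLeftContTNorm T) : T 1 1 = 1 := hT.2.2.2.1 1 one_mem_I01

lemma L_mono (hL : IsRightContLOp L) {r r' s s' : ℝ≥0∞} (h1 : r ≤ r') (h2 : s ≤ s') :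
    L r s ≤ L r' s' := by
  obtain ⟨hc, -, -, hm, -⟩ := hL
  calc L r s ≤ L r' s := hm s r r' h1
    _ = L s r' := hc r' s
    _ ≤ L s' r' := hm r' s s' h2
    _ = L r' s' := hc s' r'

lemma le_L_left (hL : IsRightContLOp L) (r s : ℝ≥0∞) : r ≤ L r s := by
  have := L_mono hL (le_refl r) (zero_le : 0 ≤ s)
  rwa [hL.2.2.1 r] at this

lemma le_L_right (hL : IsRightContLOp L) (r s : ℝ≥0∞) : s ≤ L r s := by
  rw [hL.1 r s]; exact le_L_left hL s r

lemma tau_le_one (hT : IsLeftContTNorm T) (hf : IsDDF f) (hg : IsDDF g) (x : ℝ≥0∞) :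
    tauTL L T f g x ≤ 1 := by
  refine iSup_le fun r => iSup_le fun s => iSup_le fun _ => ?_
  exact (hT.1 _ (ddf_mem_I01 hf r) _ (ddf_mem_I01 hg s)).2

lemma tau_mono : Monotone (tauTL L T f g) := by
  intro a b hab
  refine iSup_le fun r => iSup_le fun s => iSup_le fun h => ?_
  exact le_iSup_of_le r (le_iSup_of_le s (le_iSup_of_le (h.trans hab) le_rfl))

lemma tau_zero (hT : IsLeftContTNorm T) (hL : IsRightContLOp L) (hf : IsDDF f)
    (hg : IsDDF g) : tauTL L T f g 0 = 0 := by
  refine le_antisymm ?_ (zero_le)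
  refine iSup_le fun r => iSup_le fun s => iSup_le fun h => ?_
  have hr : r = 0 := le_antisymm (le_trans (le_L_left hL r s) h) (zero_le : 0 ≤ r)
  subst hr
  rw [hf.2.2.1, T_zero_left hT (ddf_mem_I01 hg s)]

lemma tau_top (hT : IsLeftContTNorm T) (hf : IsDDF f) (hg : IsDDF g) :
    tauTL L T f g ⊤ = 1 := by
  refine le_antisymm (tau_le_one hT hf hg ⊤) ?_
  have : T (f ⊤) (g ⊤) ≤ tauTL L T f g ⊤ :=
    le_iSup_of_le ⊤ (le_iSup_of_le ⊤ (le_iSup_of_le le_top le_rfl))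
  rwa [hf.2.2.2.1, hg.2.2.2.1, T_one_one hT] at this

lemma tensor_eq_sup_tau {x : ℝ≥0∞} (hx : x ≠ ⊤) :
    tensor L T f g x = ⨆ y ∈ Set.Iio x, tauTL L T f g y := by
  rw [tensor, if_neg hx]
  apply le_antisymm
  · refine iSup_le fun r => iSup_le fun s => iSup_le fun h => ?_
    refine le_iSup_of_le (L r s) (le_iSup_of_le h ?_)
    exact le_iSup_of_le r (le_iSup_of_le s (le_iSup_of_le le_rfl le_rfl))
  · refine iSup_le fun y => iSup_le fun hy => ?_
    refine iSup_le fun r => iSup_le fun s => iSup_le fun h => ?_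
    exact le_iSup_of_le r (le_iSup_of_le s (le_iSup_of_le (lt_of_le_of_lt h hy) le_rfl))

/-- (1) → (2) -/
lemma one_to_two (hT : IsLeftContTNorm T) (hL : IsRightContLOp L)
    (h1 : ∀ f g : ℝ≥0∞ → ℝ≥0∞, IsDDF f → IsDDF g → tauTL L T f g = tensor L T f g) :
    ∀ f g : ℝ≥0∞ → ℝ≥0∞, IsDDF f → IsDDF g → IsDDF (tauTL L T f g) := by
  intro f g hf hg
  refine ⟨tau_mono, tau_le_one hT hf hg, tau_zero hT hL hf hg, tau_top hT hf hg, ?_⟩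
  intro x hx0 hxtop
  calc tauTL L T f g x = tensor L T f g x := congrFun (h1 f g hf hg) x
    _ = ⨆ y ∈ Set.Iio x, tauTL L T f g y := tensor_eq_sup_tau hxtop.ne

/-- (2) → (3) -/
lemma two_to_three (hT : IsLeftContTNorm T) (hL : IsRightContLOp L)
    (h2 : ∀ f g : ℝ≥0∞ → ℝ≥0∞, IsDDF f → IsDDF g → IsDDF (tauTL L T f g)) :
    ∀ x x' y y' : ℝ≥0∞, x < x' → y < y' → L x' y' < ⊤ → L x y < L x' y' := by
  by_contra hcon
  push_neg at hcon
  obtain ⟨x, x', y, y', hx, hy, htop, hle⟩ := hcon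
  have hceq : L x y = L x' y' :=
    le_antisymm (L_mono hL hx.le hy.le) hle
  set c := L x y with hc
  -- the step functions at x and y
  set f : ℝ≥0∞ → ℝ≥0∞ := fun t => if x < t then 1 else 0 with hfdef
  set g : ℝ≥0∞ → ℝ≥0∞ := fun t => if y < t then 1 else 0 with hgdef
  have hxtop : x < ⊤ := lt_of_lt_of_le hx (le_trans (le_L_left hL x' y') htop.le)
  have hytop : y < ⊤ := lt_of_lt_of_le hy (le_trans (le_L_right hL x' y') htop.le)
  have hstep : ∀ (a : ℝ≥0∞), a < ⊤ → IsDDF (fun t => if a < t then 1 else 0) := by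
    intro a ha
    refine ⟨?_, fun t => ?_, ?_, ?_, ?_⟩
    · intro s t hst
      beta_reduce
      by_cases h : a < s
      · rw [if_pos h, if_pos (lt_of_lt_of_le h hst)]
      · rw [if_neg h]; exact zero_le
    · beta_reduce; split <;> simp
    · simp
    · simp [ha]
    · intro t ht0 httop
      beta_reduce
      by_cases h : a < t
      · rw [if_pos h]
        obtain ⟨b, hab, hbt⟩ := exists_between h
        refine le_antisymm ?_ (iSup_le fun u => iSup_le fun _ => by split <;> simp)
        refine le_iSup_of_le b (le_iSup_of_le hbt ?_)
        rw [if_pos hab]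
      · rw [if_neg h]
        refine le_antisymm (zero_le) (iSup_le fun u => iSup_le fun hu => ?_)
        rw [if_neg fun hau => h (lt_of_lt_of_le hau (le_of_lt hu))]
  have hf : IsDDF f := hstep x hxtop
  have hg : IsDDF g := hstep y hytop
  have hDDF := h2 f g hf hg
  -- 0 < c < ⊤
  have hc0 : 0 < c := by
    rw [hceq]
    exact lt_of_lt_of_le (lt_of_le_of_lt (zero_le : 0 ≤ x) hx) (le_L_left hL x' y')
  have hctop : c < ⊤ := hceq ▸ htop
  -- τ c = 1 but τ t = 0 for t < c
  have htauc : (1:ℝ≥0∞) ≤ tauTL L T f g c := by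
    have : T (f x') (g y') ≤ tauTL L T f g c :=
      le_iSup_of_le x' (le_iSup_of_le y' (le_iSup_of_le (le_of_eq hceq.symm) le_rfl))
    have hfx : f x' = 1 := if_pos hx
    have hgy : g y' = 1 := if_pos hy
    rwa [hfx, hgy, T_one_one hT] at this
  have htaut : ∀ t, t < c → tauTL L T f g t = 0 := by
    intro t htc
    refine le_antisymm ?_ (zero_le)
    refine iSup_le fun r => iSup_le fun s => iSup_le fun h => ?_
    by_cases hr : x < r
    · by_cases hs : y < s
      · exact absurd (lt_of_le_of_lt h htc) (not_lt.2 (L_mono hL hr.le hs.le))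
      · have : g s = 0 := if_neg hs
        rw [this, T_zero_right hT (ddf_mem_I01 hf r)]
    · have : f r = 0 := if_neg hr
      rw [this, T_zero_left hT (ddf_mem_I01 hg s)]
  have := hDDF.2.2.2.2 c hc0 hctop
  have hsup : (⨆ u ∈ Set.Iio c, tauTL L T f g u) = 0 := by
    refine le_antisymm (iSup_le fun u => iSup_le fun hu => le_of_eq (htaut u hu)) (zero_le)
  rw [hsup] at this
  exact absurd (this ▸ htauc) (by simp)

/-- (3) → (1) -/
lemma three_to_one (hT : IsLeftContTNorm T) (hL : IsRightContLOp L)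
    (h3 : ∀ x x' y y' : ℝ≥0∞, x < x' → y < y' → L x' y' < ⊤ → L x y < L x' y') :
    ∀ f g : ℝ≥0∞ → ℝ≥0∞, IsDDF f → IsDDF g → tauTL L T f g = tensor L T f g := by
  intro f g hf hg
  funext x
  by_cases hxtop : x = ⊤
  · subst hxtop
    rw [tensor, if_pos rfl, tau_top hT hf hg]
  rw [tensor, if_neg hxtop]
  apply le_antisymm
  · refine iSup_le fun r => iSup_le fun s => iSup_le fun h => ?_
    rcases lt_or_eq_of_le h with h' | h'
    · exact le_iSup_of_le r (le_iSup_of_le s (le_iSup_of_le h' le_rfl))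
    -- L r s = x
    by_cases hfr : f r = 0
    · rw [hfr, T_zero_left hT (ddf_mem_I01 hg s)]; exact zero_le
    by_cases hgs : g s = 0
    · rw [hgs, T_zero_right hT (ddf_mem_I01 hf r)]; exact zero_le
    -- r, s are positive (since f 0 = 0, g 0 = 0) and finite
    have hr0 : 0 < r := by
      rcases eq_or_lt_of_le (zero_le : 0 ≤ r) with h0 | h0
      · rw [← h0] at hfr; exact absurd hf.2.2.1 hfr
      · exact h0
    have hs0 : 0 < s := by
      rcases eq_or_lt_of_le (zero_le : 0 ≤ s) with h0 | h0
      · rw [← h0] at hgs; exact absurd hg.2.2.1 hgs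
      · exact h0
    have hrtop : r < ⊤ := lt_of_le_of_lt (le_trans (le_L_left hL r s) h'.le)
      (lt_top_iff_ne_top.2 hxtop)
    have hstop : s < ⊤ := lt_of_le_of_lt (le_trans (le_L_right hL r s) h'.le)
      (lt_top_iff_ne_top.2 hxtop)
    have hLrs : L r s < ⊤ := h' ▸ lt_top_iff_ne_top.2 hxtop
    -- key: any r' < r, s' < s gives L r' s' < x
    have hkey : ∀ r' < r, ∀ s' < s, L r' s' < x := fun r' hr' s' hs' =>
      h' ▸ h3 r' r s' s hr' hs' hLrs
    -- left continuity of f and g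
    have hfl : f r = ⨆ u ∈ Set.Iio r, f u := hf.2.2.2.2 r hr0 hrtop
    have hgl : g s = ⨆ u ∈ Set.Iio s, g u := hg.2.2.2.2 s hs0 hstop
    obtain ⟨-, hcomm, -, -, hmono, hlc⟩ := hT
    -- T (f r) (g s) ≤ sup_{r'<r, s'<s} T (f r') (g s')
    have step1 : T (f r) (g s) = ⨆ p ∈ Set.Iio (f r), T p (g s) :=
      hlc (g s) (ddf_mem_I01 hg s) (f r) (ddf_mem_I01 hf r) (pos_iff_ne_zero.2 hfr)
    rw [step1]
    refine iSup_le fun p => iSup_le fun hp => ?_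
    have hp1 : p ∈ I01 := ⟨zero_le, le_trans hp.le (hf.2.1 r)⟩
    -- p < f r = sup_{u<r} f u, so ∃ u < r, p < f u
    obtain ⟨u, hur, hpu⟩ : ∃ u < r, p < f u := by
      by_contra hcon2
      push_neg at hcon2
      have : f r ≤ p := hfl ▸ iSup_le fun u => iSup_le fun hu => hcon2 u hu
      exact absurd hp (not_lt.2 this)
    have h4 : T p (g s) ≤ T (f u) (g s) :=
      hmono (g s) (ddf_mem_I01 hg s) p hp1 (f u) (ddf_mem_I01 hf u) hpu.le
    refine le_trans h4 ?_
    -- now do the same in the second variable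
    rw [hcomm (f u) (ddf_mem_I01 hf u) (g s) (ddf_mem_I01 hg s)]
    have step2 : T (g s) (f u) = ⨆ q ∈ Set.Iio (g s), T q (f u) :=
      hlc (f u) (ddf_mem_I01 hf u) (g s) (ddf_mem_I01 hg s) (pos_iff_ne_zero.2 hgs)
    rw [step2]
    refine iSup_le fun q => iSup_le fun hq => ?_
    have hq1 : q ∈ I01 := ⟨zero_le, le_trans hq.le (hg.2.1 s)⟩
    obtain ⟨v, hvs, hqv⟩ : ∃ v < s, q < g v := by
      by_contra hcon2
      push_neg at hcon2
      have : g s ≤ q := hgl ▸ iSup_le fun v => iSup_le fun hv => hcon2 v hv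
      exact absurd hq (not_lt.2 this)
    have h5 : T q (f u) ≤ T (g v) (f u) :=
      hmono (f u) (ddf_mem_I01 hf u) q hq1 (g v) (ddf_mem_I01 hg v) hqv.le
    refine le_trans h5 ?_
    rw [hcomm (g v) (ddf_mem_I01 hg v) (f u) (ddf_mem_I01 hf u)]
    exact le_iSup_of_le u (le_iSup_of_le v (le_iSup_of_le (hkey u hur v hvs) le_rfl))
  · refine iSup_le fun r => iSup_le fun s => iSup_le fun h => ?_
    exact le_iSup_of_le r (le_iSup_of_le s (le_iSup_of_le h.le le_rfl))

end Aux

theorem tau_eq_tensor_iff_LCS (T L : ℝ≥0∞ → ℝ≥0∞ → ℝ≥0∞)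
    (hT : IsLeftContTNorm T) (hL : IsRightContLOp L) :
    ((∀ f g : ℝ≥0∞ → ℝ≥0∞, IsDDF f → IsDDF g → tauTL L T f g = tensor L T f g) ↔
      (∀ f g : ℝ≥0∞ → ℝ≥0∞, IsDDF f → IsDDF g → IsDDF (tauTL L T f g))) ∧
    ((∀ f g : ℝ≥0∞ → ℝ≥0∞, IsDDF f → IsDDF g → IsDDF (tauTL L T f g)) ↔
      (∀ x x' y y' : ℝ≥0∞, x < x' → y < y' → L x' y' < ⊤ → L x y < L x' y')) := by
  constructor
  · exact ⟨one_to_two hT hL, fun h2 => three_to_one hT hL (two_to_three hT hL h2)⟩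
  · exact ⟨two_to_three hT hL, fun h3 => one_to_two hT hL (three_to_one hT hL h3)⟩
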